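/- Let V be a finite set, ℰ_f a finite multiset of subsets of V, S ⊆ V, ℰ_r ⊆ ℰ_f the hyperedges not intersecting S, and d_S = |ℰ_f| − |ℰ_r|. For any S* ⊆ V with |S*| = k, Cov(S*, ℰ_f) ≤ d_S + Σ over the k largest values of Cov({v}, ℰ_r) among v ∈ V. -/

import Mathlib

/-- Coverage: number of hyperedges in the multiset `ℰ` intersecting `S`. -/
def Cov {V : Type*} [DecidableEq V] (S : Finset V) (ℰ : Multiset (Finset V)) : ℕ :=
  (ℰ.filter (fun E => (S ∩ E).Nonempty)).card

/-- Sum of the `k` largest values of `f` over `V` = maximum, over size-`k` subsets `T` of `V`,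
of the sum of `f` over `T`. -/
def topkSum {V : Type*} [Fintype V] [DecidableEq V] (k : ℕ) (f : V → ℕ) : ℕ :=
  (Finset.univ.powersetCard k).sup (fun T => ∑ v ∈ T, f v)

theorem stmt_7 {V : Type*} [Fintype V] [DecidableEq V]
    (ℰf ℰr : Multiset (Finset V)) (S : Finset V)
    (hr : ℰr = ℰf.filter (fun E => ¬ (S ∩ E).Nonempty))
    (dS : ℕ) (hd : dS = Multiset.card ℰf - Multiset.card ℰr)
    (k : ℕ) (Sstar : Finset V) (hcard : Sstar.card = k) :
    Cov Sstar ℰf ≤ dS + topkSum k (fun v => Cov ({v} : Finset V) ℰr) := by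
  classical
  have step : ∀ (T : Finset V) (E : Finset V) (ℰ : Multiset (Finset V)),
      Cov T (E ::ₘ ℰ) = (if (T ∩ E).Nonempty then 1 else 0) + Cov T ℰ := by
    intro T E ℰ
    simp only [Cov, Multiset.filter_cons, Multiset.card_add]
    split <;> simp [add_comm]
  have key : ∀ ℰ : Multiset (Finset V),
      Cov Sstar ℰ ≤ ∑ v ∈ Sstar, Cov ({v} : Finset V) ℰ := by
    intro ℰ
    induction ℰ using Multiset.induction with
    | empty => simp [Cov]
    | cons E ℰ ih =>
      simp only [step, Finset.sum_add_distrib]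
      have h2 : (if (Sstar ∩ E).Nonempty then 1 else 0) ≤
          ∑ u ∈ Sstar, (if (({u} : Finset V) ∩ E).Nonempty then 1 else 0) := by
        by_cases h : (Sstar ∩ E).Nonempty
        · obtain ⟨v, hv⟩ := h
          rw [Finset.mem_inter] at hv
          have : (({v} : Finset V) ∩ E).Nonempty := ⟨v, by simp [hv.2]⟩
          calc (if (Sstar ∩ E).Nonempty then 1 else 0) ≤ 1 := by split <;> simp
            _ ≤ _ := Finset.single_le_sum (f := fun u =>
                (if (({u} : Finset V) ∩ E).Nonempty then 1 else 0))
                (fun _ _ => Nat.zero_le _) hv.1 |>.trans_eq' (by simp [this])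
        · simp [h]
      exact add_le_add h2 ih
  have hsplit : Cov Sstar ℰf ≤ dS + Cov Sstar ℰr := by
    have hEf : ℰf = ℰr + ℰf.filter (fun E => (S ∩ E).Nonempty) := by
      rw [hr, Multiset.filter_add_filter]
      have h1 : Multiset.filter (fun E => ¬(S ∩ E).Nonempty ∨ (S ∩ E).Nonempty) ℰf = ℰf :=
        Multiset.filter_eq_self.2 (fun a _ => (em _).symm)
      have h2 : Multiset.filter (fun E => ¬(S ∩ E).Nonempty ∧ (S ∩ E).Nonempty) ℰf = 0 :=
        Multiset.filter_eq_nil.2 (fun a _ h => h.1 h.2)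
      rw [h1, h2]; simp
    have hd' : dS = Multiset.card (ℰf.filter (fun E => (S ∩ E).Nonempty)) := by
      rw [hd]; conv_lhs => rw [hEf]
      simp
    rw [hd']
    conv_lhs => rw [hEf]
    unfold Cov
    rw [Multiset.filter_add, Multiset.card_add, add_comm]
    gcongr
    exact Multiset.filter_le (fun E => (Sstar ∩ E).Nonempty) _
  refine hsplit.trans ?_
  gcongr
  calc Cov Sstar ℰr ≤ ∑ v ∈ Sstar, Cov ({v} : Finset V) ℰr := key ℰr
    _ ≤ _ := by
      apply Finset.le_sup (f := fun T => ∑ v ∈ T, Cov ({v} : Finset V) ℰr)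
      simp [Finset.mem_powersetCard, hcard]
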